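/- Let n ≥ 1 be odd and let A = (a_{i,j}) be the n×n matrix over Z_{3n²} defined by a_{i,j} = (−1)^{i+j}·(3n(j−1) + 3(i−1) + 1) for 1 ≤ j ≤ (n+1)/2 and a_{i,j} = (−1)^{i+j}·(3nj − 3i + 1) for (n+3)/2 ≤ j ≤ n. Then for every j ∈ [1,n] the sum of the entries of column j equals (−1)^{j−1}·(3nj − (3n+1)/2) in Z_{3n²}. Moreover, if n ≡ 1 (mod 4) then for every i ∈ [1,n] the sum of the entries of row i equals (−1)^{i−1}·(3i − 2 + 3n(n−1)/2), while if n ≡ 3 (mod 4) then for every i ∈ [1,n] the sum of the entries of row i equals (−1)^{i−1}·(3(n+1−i) − 2 + 3n(n−1)/2), in Z_{3n²}. -/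
import Mathlib

open Finset

lemma altE (n : ℕ) : ∑ j ∈ Finset.Ioc 0 n, (-1:ℤ)^j = if Even n then 0 else -1 := by
  induction n with
  | zero => simp
  | succ n ih =>
    rw [Finset.sum_Ioc_succ_top (Nat.zero_le _), ih]
    rcases Nat.even_or_odd n with h | h
    · rw [if_pos h, if_neg (by simpa [Nat.even_add_one] using h),
        Odd.neg_one_pow (Even.add_one h)]
      ring
    · rw [if_neg (Nat.not_even_iff_odd.mpr h),
        if_pos (Odd.add_one h), Even.neg_one_pow (Odd.add_one h)]
      ring

lemma altS (n : ℕ) : ∑ j ∈ Finset.Ioc 0 n, (-1:ℤ)^j * j = (-1)^n * ((n+1)/2 : ℕ) := by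
  induction n with
  | zero => simp
  | succ n ih =>
    rw [Finset.sum_Ioc_succ_top (Nat.zero_le _), ih]
    rcases Nat.even_or_odd n with ⟨k, hk⟩ | ⟨k, hk⟩
    · have h1 : (n+1)/2 = k := by omega
      have h2 : (n+1+1)/2 = k+1 := by omega
      have h3 : (-1:ℤ)^n = 1 := Even.neg_one_pow ⟨k, hk⟩
      have h4 : (-1:ℤ)^(n+1) = -1 := by rw [pow_succ, h3]; ring
      have h5 : (n:ℤ) = 2*k := by omega
      rw [h1, h2, h3, h4]
      push_cast [h5]; ring
    · have h1 : (n+1)/2 = k+1 := by omega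
      have h2 : (n+1+1)/2 = k+1 := by omega
      have h3 : (-1:ℤ)^n = -1 := Odd.neg_one_pow ⟨k, hk⟩
      have h4 : (-1:ℤ)^(n+1) = 1 := by rw [pow_succ, h3]; ring
      have h5 : (n:ℤ) = 2*k+1 := by omega
      rw [h1, h2, h3, h4]
      push_cast [h5]; ring

lemma altLinFull (a b : ℤ) (q : ℕ) :
    ∑ j ∈ Finset.Ioc 0 q, (-1:ℤ)^j * (a + b * j)
      = a * (if Even q then 0 else -1) + b * ((-1)^q * ((q+1)/2 : ℕ)) := by
  have h : ∀ j ∈ Finset.Ioc 0 q, (-1:ℤ)^j * (a + b*j) = a * (-1)^j + b * ((-1)^j * j) := by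
    intro j _; ring
  rw [Finset.sum_congr rfl h, Finset.sum_add_distrib, ← Finset.mul_sum, ← Finset.mul_sum,
    altE, altS]

lemma castSum (N : ℕ) (s : Finset ℕ) (f : ℕ → ZMod N) (g : ℕ → ℤ)
    (h : ∀ i ∈ s, f i = (g i : ZMod N)) :
    ∑ i ∈ s, f i = ((∑ i ∈ s, g i : ℤ) : ZMod N) := by
  rw [Finset.sum_congr rfl h, Int.cast_sum]

lemma altLinIoc (a b : ℤ) {p q : ℕ} (h : p ≤ q) :
    ∑ j ∈ Finset.Ioc p q, (-1:ℤ)^j * (a + b * j)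
      = (a * (if Even q then 0 else -1) + b * ((-1)^q * ((q+1)/2 : ℕ)))
        - (a * (if Even p then 0 else -1) + b * ((-1)^p * ((p+1)/2 : ℕ))) := by
  have h2 := Finset.sum_Ioc_consecutive (fun j => (-1:ℤ)^j * (a + b*j)) (Nat.zero_le p) h
  rw [← altLinFull a b p, ← altLinFull a b q, ← h2]; ring


/-- Remark 3.8: total row and column sums of the matrix of Proposition 3.7
(the globally simple NH_{n²}(n;n)) over Z_{3n²}, n odd. -/
theorem stmt11 (n : ℕ) (hn : 1 ≤ n) (hodd : Odd n)
    (A : ℕ → ℕ → ZMod (3 * n ^ 2))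
    (hA : ∀ i ∈ Finset.Icc 1 n, ∀ j ∈ Finset.Icc 1 n,
      (j ≤ (n + 1) / 2 →
        A i j = (((-1) ^ (i + j) * (3 * (n : ℤ) * ((j : ℤ) - 1) + 3 * ((i : ℤ) - 1) + 1) : ℤ)
          : ZMod (3 * n ^ 2))) ∧
      ((n + 3) / 2 ≤ j →
        A i j = (((-1) ^ (i + j) * (3 * (n : ℤ) * j - 3 * (i : ℤ) + 1) : ℤ)
          : ZMod (3 * n ^ 2)))) :
    (∀ j ∈ Finset.Icc 1 n,
      (∑ i ∈ Finset.Icc 1 n, A i j) =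
        (((-1) ^ (j - 1) * (3 * (n : ℤ) * j - (3 * (n : ℤ) + 1) / 2) : ℤ) : ZMod (3 * n ^ 2))) ∧
    (n % 4 = 1 →
      ∀ i ∈ Finset.Icc 1 n,
        (∑ j ∈ Finset.Icc 1 n, A i j) =
          (((-1) ^ (i - 1) * (3 * (i : ℤ) - 2 + 3 * (n : ℤ) * ((n : ℤ) - 1) / 2) : ℤ)
            : ZMod (3 * n ^ 2))) ∧
    (n % 4 = 3 →
      ∀ i ∈ Finset.Icc 1 n,
        (∑ j ∈ Finset.Icc 1 n, A i j) =
          (((-1) ^ (i - 1) * (3 * ((n : ℤ) + 1 - i) - 2 + 3 * (n : ℤ) * ((n : ℤ) - 1) / 2) : ℤ)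
            : ZMod (3 * n ^ 2))) := by
  obtain ⟨k, hk⟩ := hodd
  have hIcc : Finset.Icc 1 n = Finset.Ioc 0 n := Finset.Icc_add_one_left_eq_Ioc 0 n
  have hnE : (if Even n then (0:ℤ) else -1) = -1 := by
    rw [if_neg]; rw [Nat.even_iff]; omega
  have hnP : (-1:ℤ)^n = -1 := Odd.neg_one_pow ⟨k, hk⟩
  have hnD : (n+1)/2 = k+1 := by omega
  have hnz : (n:ℤ) = 2*k+1 := by omega
  have hm_le : k+1 ≤ n := by omega
  -- general row sum formula
  have hrow : ∀ i : ℕ, i ∈ Finset.Icc 1 n →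
      ∑ j ∈ Finset.Icc 1 n, A i j =
      (Int.cast
        ((-1:ℤ)^i * ((3*(i:ℤ)-2-3*(n:ℤ)) * (if Even (k+1) then (0:ℤ) else -1)
            + 3*(n:ℤ) * ((-1:ℤ)^(k+1) * (((k+2)/2 : ℕ) : ℤ)))
          + (-1:ℤ)^i * (((1-3*(i:ℤ)) * (if Even n then (0:ℤ) else -1)
              + 3*(n:ℤ) * ((-1:ℤ)^n * (((n+1)/2 : ℕ) : ℤ)))
            - ((1-3*(i:ℤ)) * (if Even (k+1) then (0:ℤ) else -1)
              + 3*(n:ℤ) * ((-1:ℤ)^(k+1) * (((k+2)/2 : ℕ) : ℤ)))))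
        : ZMod (3*n^2)) := by
    intro i hi
    rw [hIcc, ← Finset.sum_Ioc_consecutive (fun j => A i j) (Nat.zero_le (k+1)) hm_le]
    have hmem1 : ∀ j ∈ Finset.Ioc 0 (k+1),
        A i j = (((-1:ℤ)^(i+j) * (3*(n:ℤ)*((j:ℤ)-1) + 3*((i:ℤ)-1) + 1) : ℤ) : ZMod (3*n^2)) := by
      intro j hj
      have hj' := Finset.mem_Ioc.mp hj
      exact (hA i hi j (Finset.mem_Icc.mpr ⟨by omega, by omega⟩)).1 (by omega)
    have hmem2 : ∀ j ∈ Finset.Ioc (k+1) n,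
        A i j = (((-1:ℤ)^(i+j) * (3*(n:ℤ)*(j:ℤ) - 3*(i:ℤ) + 1) : ℤ) : ZMod (3*n^2)) := by
      intro j hj
      have hj' := Finset.mem_Ioc.mp hj
      exact (hA i hi j (Finset.mem_Icc.mpr ⟨by omega, by omega⟩)).2 (by omega)
    rw [castSum _ _ _ (fun j => (-1:ℤ)^(i+j) * (3*(n:ℤ)*((j:ℤ)-1) + 3*((i:ℤ)-1) + 1)) hmem1,
        castSum _ _ _ (fun j => (-1:ℤ)^(i+j) * (3*(n:ℤ)*(j:ℤ) - 3*(i:ℤ) + 1)) hmem2,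
        ← Int.cast_add]
    congr 1
    have e1 : ∀ j ∈ Finset.Ioc 0 (k+1),
        (-1:ℤ)^(i+j) * (3*(n:ℤ)*((j:ℤ)-1) + 3*((i:ℤ)-1) + 1)
          = (-1:ℤ)^i * ((-1)^j * ((3*(i:ℤ)-2-3*(n:ℤ)) + 3*(n:ℤ)*j)) := by
      intro j _; rw [pow_add]; ring
    have e2 : ∀ j ∈ Finset.Ioc (k+1) n,
        (-1:ℤ)^(i+j) * (3*(n:ℤ)*(j:ℤ) - 3*(i:ℤ) + 1)
          = (-1:ℤ)^i * ((-1)^j * ((1-3*(i:ℤ)) + 3*(n:ℤ)*j)) := by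
      intro j _; rw [pow_add]; ring
    rw [Finset.sum_congr rfl e1, Finset.sum_congr rfl e2, ← Finset.mul_sum, ← Finset.mul_sum,
      altLinFull, altLinIoc _ _ hm_le]
  refine ⟨?_, ?_, ?_⟩
  · -- column sums
    intro j hj
    rw [Finset.mem_Icc] at hj
    obtain ⟨j', rfl⟩ : ∃ j', j = j'+1 := ⟨j-1, by omega⟩
    have hmem : (j'+1) ∈ Finset.Icc 1 n := Finset.mem_Icc.mpr hj
    have hdiv : (3*(n:ℤ)+1)/2 = 3*(k:ℤ)+2 := by omega
    by_cases hjm : j'+1 ≤ (n+1)/2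
    · have hval : ∀ x ∈ Finset.Icc 1 n,
          A x (j'+1) = (((-1:ℤ)^(x+(j'+1)) *
            (3*(n:ℤ)*(((j'+1:ℕ):ℤ)-1) + 3*((x:ℤ)-1) + 1) : ℤ) : ZMod (3*n^2)) :=
        fun x hx => (hA x hx _ hmem).1 hjm
      rw [castSum _ _ _ _ hval]
      congr 1
      rw [hIcc]
      have e1 : ∀ x ∈ Finset.Ioc 0 n,
          (-1:ℤ)^(x+(j'+1)) * (3*(n:ℤ)*(((j'+1:ℕ):ℤ)-1) + 3*((x:ℤ)-1) + 1)
            = (-1:ℤ)^(j'+1) * ((-1)^x * ((3*(n:ℤ)*((j':ℤ)+1) - 3*(n:ℤ) - 2) + 3*x)) := by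
        intro x _; rw [pow_add]; push_cast; ring
      rw [Finset.sum_congr rfl e1, ← Finset.mul_sum, altLinFull, hnE, hnP, hnD,
        Nat.add_sub_cancel, hdiv, pow_succ]
      push_cast [hnz]
      ring
    · have hjm' : (n+3)/2 ≤ j'+1 := by omega
      have hval : ∀ x ∈ Finset.Icc 1 n,
          A x (j'+1) = (((-1:ℤ)^(x+(j'+1)) *
            (3*(n:ℤ)*((j'+1:ℕ):ℤ) - 3*(x:ℤ) + 1) : ℤ) : ZMod (3*n^2)) :=
        fun x hx => (hA x hx _ hmem).2 hjm'
      rw [castSum _ _ _ _ hval]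
      congr 1
      rw [hIcc]
      have e1 : ∀ x ∈ Finset.Ioc 0 n,
          (-1:ℤ)^(x+(j'+1)) * (3*(n:ℤ)*((j'+1:ℕ):ℤ) - 3*(x:ℤ) + 1)
            = (-1:ℤ)^(j'+1) * ((-1)^x * ((3*(n:ℤ)*((j':ℤ)+1) + 1) + (-3)*x)) := by
        intro x _; rw [pow_add]; push_cast; ring
      rw [Finset.sum_congr rfl e1, ← Finset.mul_sum, altLinFull, hnE, hnP, hnD,
        Nat.add_sub_cancel, hdiv, pow_succ]
      push_cast [hnz]
      ring
  · -- n % 4 = 1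
    intro h4 i hi
    obtain ⟨t, hkt⟩ : ∃ t, k = 2*t := ⟨k/2, by omega⟩
    have hkz : (k:ℤ) = 2*(t:ℤ) := by omega
    have hiI := Finset.mem_Icc.mp hi
    obtain ⟨i', rfl⟩ : ∃ i', i = i'+1 := ⟨i-1, by omega⟩
    rw [hrow _ hi]
    congr 1
    have hEm : (if Even (k+1) then (0:ℤ) else -1) = -1 := by
      rw [if_neg]; rw [Nat.even_iff]; omega
    have hPm : (-1:ℤ)^(k+1) = -1 := Odd.neg_one_pow ⟨t, by omega⟩
    have hDm : (k+2)/2 = t+1 := by omega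
    have hdiv : 3*(n:ℤ)*((n:ℤ)-1)/2 = 3*(n:ℤ)*(2*(t:ℤ)) := by
      rw [show 3*(n:ℤ)*((n:ℤ)-1) = (3*(n:ℤ)*(2*(t:ℤ)))*2 by rw [hnz, hkz]; ring,
        Int.mul_ediv_cancel _ two_ne_zero]
    rw [hEm, hPm, hDm, hnE, hnP, hnD, Nat.add_sub_cancel, hdiv, pow_succ]
    push_cast [hnz, hkz]
    ring
  · -- n % 4 = 3
    intro h4 i hi
    obtain ⟨t, hkt⟩ : ∃ t, k = 2*t+1 := ⟨k/2, by omega⟩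
    have hkz : (k:ℤ) = 2*(t:ℤ)+1 := by omega
    have hiI := Finset.mem_Icc.mp hi
    obtain ⟨i', rfl⟩ : ∃ i', i = i'+1 := ⟨i-1, by omega⟩
    rw [hrow _ hi]
    congr 1
    have hEm : (if Even (k+1) then (0:ℤ) else -1) = 0 := by
      rw [if_pos]; rw [Nat.even_iff]; omega
    have hPm : (-1:ℤ)^(k+1) = 1 := Even.neg_one_pow (Nat.even_iff.mpr (by omega))
    have hDm : (k+2)/2 = t+1 := by omega
    have hdiv : 3*(n:ℤ)*((n:ℤ)-1)/2 = 3*(n:ℤ)*(2*(t:ℤ)+1) := by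
      rw [show 3*(n:ℤ)*((n:ℤ)-1) = (3*(n:ℤ)*(2*(t:ℤ)+1))*2 by rw [hnz, hkz]; ring,
        Int.mul_ediv_cancel _ two_ne_zero]
    rw [hEm, hPm, hDm, hnE, hnP, hnD, Nat.add_sub_cancel, hdiv, pow_succ]
    push_cast [hnz, hkz]
    ring
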